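/- arXiv:1002.4106 — 4 statements merged into one kernel-verified Lean document; each statement's English description precedes it below -/
import Mathlib

section
/- Let m ≥ 2 be an integer and let δ₁, δ₂ be real numbers with 0 < δ₁ < m, 0 ≤ δ₂ ≤ m − 1/2, and additionally δ₂ ≤ 5/4 if m = 2. Then there exists a constant c > 0 (one may take c = min(δ₁/2, δ₁(m−δ₁))) such that for all p, ϖ ∈ [0,1): δ₁·(1/2 + (m−1/2−δ₁)·p + p(1−p)(1−ϖ)/(1+p(1−ϖ))) + (1−p)·δ₂·(m−1 + (1/2−δ₂)·ϖ − p·ϖ(1−ϖ)/(1+p(1−ϖ))) − (1−p)·(δ₂²/4)·(1−ϖ)(1−p(1−ϖ))/(1+p(1−ϖ))² ≥ c. -/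
set_option maxHeartbeats 2000000 in
/-- Complex hyperbolic half-space weight lemma (Lemma on weights, complex case):
for `0 < δ₁ < m`, `0 ≤ δ₂ ≤ m - 1/2` (and `δ₂ ≤ 5/4` if `m = 2`), the quantity
`-Δ log w - |d log w|²`, expressed in the variables `p = tanh²(s/2)` and
`ϖ = tanh²(ρ/2)`, is bounded below by a positive constant depending only on `δ₁`. -/
theorem stmt_1 (m : ℕ) (hm : 2 ≤ m) (δ₁ δ₂ : ℝ)
    (hδ₁pos : 0 < δ₁) (hδ₁lt : δ₁ < (m : ℝ))
    (hδ₂nonneg : 0 ≤ δ₂) (hδ₂le : δ₂ ≤ (m : ℝ) - 1/2)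
    (hδ₂le' : m = 2 → δ₂ ≤ 5/4) :
    ∃ c > 0, ∀ p ϖ : ℝ, 0 ≤ p → p < 1 → 0 ≤ ϖ → ϖ < 1 →
      δ₁ * (1/2 + ((m : ℝ) - 1/2 - δ₁) * p
          + p * (1 - p) * (1 - ϖ) / (1 + p * (1 - ϖ)))
        + (1 - p) * δ₂ * ((m : ℝ) - 1 + (1/2 - δ₂) * ϖ
          - p * ϖ * (1 - ϖ) / (1 + p * (1 - ϖ)))
        - (1 - p) * (δ₂ ^ 2 / 4) *
          ((1 - ϖ) * (1 - p * (1 - ϖ)) / (1 + p * (1 - ϖ)) ^ 2) ≥ c := by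
  have hm2 : (2:ℝ) ≤ (m:ℝ) := by exact_mod_cast hm
  refine ⟨min (δ₁/2) (δ₁*((m:ℝ)-δ₁)), lt_min (by linarith) (by nlinarith), ?_⟩
  intro p ϖ hp0 hp1 hw0 hw1
  set q : ℝ := p * (1 - ϖ) with hqdef
  have hw1' : (0:ℝ) ≤ 1 - ϖ := by linarith
  have hq0 : 0 ≤ q := mul_nonneg hp0 hw1'
  have hq1 : q ≤ 1 - ϖ := by nlinarith
  have hD : (0:ℝ) < 1 + q := by linarith
  have hD2 : (0:ℝ) < (1 + q)^2 := by positivity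
  have h2ϖ : (0:ℝ) < 2 - ϖ := by linarith
  -- bound on first linear part
  have h1 : min (δ₁/2) (δ₁*((m:ℝ)-δ₁)) ≤ δ₁ * (1/2 + ((m:ℝ)-1/2-δ₁)*p) := by
    have a1 : min (δ₁/2) (δ₁*((m:ℝ)-δ₁)) ≤ δ₁/2 := min_le_left _ _
    have a2 : min (δ₁/2) (δ₁*((m:ℝ)-δ₁)) ≤ δ₁*((m:ℝ)-δ₁) := min_le_right _ _
    nlinarith [mul_nonneg hp0 (sub_nonneg.2 a2),
      mul_nonneg (sub_nonneg.2 hp1.le) (sub_nonneg.2 a1)]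
  -- the extra nonnegative term in the δ₁ part
  have h2 : 0 ≤ δ₁ * (p*(1-p)*(1-ϖ)/(1+q)) := by
    apply mul_nonneg hδ₁pos.le
    apply div_nonneg _ hD.le
    have : (0:ℝ) ≤ 1 - p := by linarith
    positivity
  -- the G term
  have b1 : ϖ*q/(1+q) ≤ ϖ*(1-ϖ)/(2-ϖ) := by
    rw [div_le_div_iff₀ hD h2ϖ]
    nlinarith [mul_nonneg hw0 (sub_nonneg.2 hq1)]
  have b2 : (1-ϖ)*(1-q)/(1+q)^2 ≤ 1-ϖ := by
    rw [div_le_iff₀ hD2]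
    nlinarith [mul_nonneg hw1' hq0, mul_nonneg hw1' (mul_nonneg hq0 hq0)]
  have key : 0 ≤ (m:ℝ)-1+(1/2-δ₂)*ϖ - ϖ*(1-ϖ)/(2-ϖ) - δ₂/4*(1-ϖ) := by
    have hdiv : ϖ*(1-ϖ)/(2-ϖ) ≤ (m:ℝ)-1+(1/2-δ₂)*ϖ - δ₂/4*(1-ϖ) := by
      rw [div_le_iff₀ h2ϖ]
      rcases eq_or_lt_of_le hm with h2 | h3
      · have hδ : δ₂ ≤ 5/4 := hδ₂le' h2.symm
        have hmm : (m:ℝ) = 2 := by exact_mod_cast h2.symm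
        rw [hmm]
        have t1 : 0 ≤ (5/4-δ₂)*(4*ϖ*(2-ϖ)+(1-ϖ)*(2-ϖ)) := by
          apply mul_nonneg (by linarith)
          nlinarith
        have t2 := sq_nonneg (46*ϖ-41)
        linarith
      · have hm3 : (3:ℝ) ≤ (m:ℝ) := by exact_mod_cast h3
        have t1 : 0 ≤ ((m:ℝ)-1/2-δ₂)*(4*ϖ*(2-ϖ)+(1-ϖ)*(2-ϖ)) := by
          apply mul_nonneg (by linarith)
          nlinarith
        have t2 : 0 ≤ (3*(m:ℝ)+1/2)*((1-ϖ)*(1-ϖ)) := by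
          apply mul_nonneg (by linarith) (mul_nonneg hw1' hw1')
        have t3 : 0 ≤ (3*(m:ℝ)-15/2)*(1-ϖ) := mul_nonneg (by linarith) hw1'
        linarith
    linarith
  have hG : 0 ≤ (m:ℝ)-1+(1/2-δ₂)*ϖ - ϖ*q/(1+q) - δ₂/4*((1-ϖ)*(1-q)/(1+q)^2) := by
    have : δ₂/4*((1-ϖ)*(1-q)/(1+q)^2) ≤ δ₂/4*(1-ϖ) := by
      apply mul_le_mul_of_nonneg_left b2 (by linarith)
    linarith
  have h3 : 0 ≤ (1-p) * (δ₂ * ((m:ℝ)-1+(1/2-δ₂)*ϖ - ϖ*q/(1+q) - δ₂/4*((1-ϖ)*(1-q)/(1+q)^2))) :=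
    mul_nonneg (by linarith) (mul_nonneg hδ₂nonneg hG)
  have hEq : δ₁ * (1/2 + ((m : ℝ) - 1/2 - δ₁) * p + p * (1 - p) * (1 - ϖ) / (1 + q))
        + (1 - p) * δ₂ * ((m : ℝ) - 1 + (1/2 - δ₂) * ϖ - p * ϖ * (1 - ϖ) / (1 + q))
        - (1 - p) * (δ₂ ^ 2 / 4) * ((1 - ϖ) * (1 - q) / (1 + q) ^ 2)
      = δ₁ * (1/2 + ((m:ℝ)-1/2-δ₁)*p) + δ₁ * (p*(1-p)*(1-ϖ)/(1+q))
        + (1-p) * (δ₂ * ((m:ℝ)-1+(1/2-δ₂)*ϖ - ϖ*q/(1+q) - δ₂/4*((1-ϖ)*(1-q)/(1+q)^2))) := by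
    field_simp
    ring
  rw [ge_iff_le, hEq]
  linarith
end

section
/- Let ℋ, λ ∈ ℝ with ℋ²/4 + λ > 0, and set α₊ = ℋ/2 + √(ℋ²/4+λ), α₋ = ℋ/2 − √(ℋ²/4+λ). Fix s₀ ∈ ℝ. Let u : ℝ → ℝ be continuous with |u(ς)| ≤ C·e^{−ας} for all ς ≥ s₀, where C ≥ 0 and α₋ < α < α₊. Then for all s ≥ s₀: |G₀(u)(s)| ≤ (C/(α₊−α₋))·(1/(α−α₋) + 1/(α₊−α))·e^{−αs}, where G₀(u)(s) = (1/(α₊−α₋))·( −e^{−α₋ s}·∫_s^{∞} e^{α₋ ς} u(ς) dς − e^{−α₊ s}·∫_{s₀}^{s} e^{α₊ ς} u(ς) dς ). -/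
open MeasureTheory

private lemma exp_int_Ioi (a b : ℝ) (hb : 0 < b) :
    ∫ x in Set.Ioi a, Real.exp (-b * x) = Real.exp (-b * a) / b := by
  have hderiv : ∀ x ∈ Set.Ioi a, HasDerivAt (fun y => -Real.exp (-b * y) / b)
      (Real.exp (-b * x)) x := by
    intro x _
    have h1 : HasDerivAt (fun y : ℝ => -b * y) (-b) x := by
      simpa using (hasDerivAt_id x).const_mul (-b)
    have h2 := (Real.hasDerivAt_exp (-b * x)).comp x h1
    have h3 := (h2.div_const b).neg
    rw [show (fun y => -Real.exp (-b * y) / b) = -fun x => (Real.exp ∘ HMul.hMul (-b)) x / b by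
      ext y; simp [Function.comp, neg_div]]
    refine h3.congr_deriv ?_
    rw [mul_neg, neg_div, neg_neg, mul_div_assoc, div_self (ne_of_gt hb), mul_one]
  have hcont : ContinuousWithinAt (fun y => -Real.exp (-b * y) / b) (Set.Ici a) a :=
    (Continuous.continuousWithinAt (by fun_prop))
  have hint : IntegrableOn (fun x : ℝ => Real.exp (-b * x)) (Set.Ioi a) :=
    exp_neg_integrableOn_Ioi a hb
  have htend : Filter.Tendsto (fun y => -Real.exp (-b * y) / b) Filter.atTop (nhds 0) := by
    have : Filter.Tendsto (fun y : ℝ => Real.exp (-b * y)) Filter.atTop (nhds 0) := by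
      apply Real.tendsto_exp_atBot.comp
      exact Filter.Tendsto.const_mul_atTop_of_neg (by linarith) Filter.tendsto_id
    simpa using (this.neg.div_const b)
  have := MeasureTheory.integral_Ioi_of_hasDerivAt_of_tendsto hcont hderiv hint htend
  rw [this]
  field_simp
  ring

open intervalIntegral in
private lemma exp_int_interval (a b c : ℝ) (hc : c ≠ 0) :
    ∫ x in a..b, Real.exp (c * x) = (Real.exp (c * b) - Real.exp (c * a)) / c := by
  rw [integral_comp_mul_left (f := Real.exp) (c := c) hc,
    integral_exp, smul_eq_mul]
  field_simp

/-- Property (2) of `G₀`: for `αm < α < αp`, the operator `G₀` preserves the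
space `C⁰_α` of functions bounded by a constant times `e^{-αs}`. -/
theorem stmt_9 (ℋ lam : ℝ) (hpos : 0 < ℋ ^ 2 / 4 + lam)
    (αp αm : ℝ)
    (hαp : αp = ℋ / 2 + Real.sqrt (ℋ ^ 2 / 4 + lam))
    (hαm : αm = ℋ / 2 - Real.sqrt (ℋ ^ 2 / 4 + lam))
    (s₀ : ℝ)
    (u : ℝ → ℝ) (hu : Continuous u)
    (C α : ℝ) (hC : 0 ≤ C) (hα₁ : αm < α) (hα₂ : α < αp)
    (hbound : ∀ ς : ℝ, s₀ ≤ ς → |u ς| ≤ C * Real.exp (-α * ς)) :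
    ∀ s : ℝ, s₀ ≤ s →
      |(1 / (αp - αm)) *
        (-(Real.exp (-αm * s) * ∫ ς in Set.Ioi s, Real.exp (αm * ς) * u ς)
          - Real.exp (-αp * s) * ∫ ς in s₀..s, Real.exp (αp * ς) * u ς)|
      ≤ (C / (αp - αm)) * (1 / (α - αm) + 1 / (αp - α)) * Real.exp (-α * s) := by
  intro s hs
  have hD : 0 < αp - αm := by linarith
  have hb1 : 0 < α - αm := by linarith
  have hb2 : 0 < αp - α := by linarith
  -- bound on the Ioi integral
  have hIoi : |∫ ς in Set.Ioi s, Real.exp (αm * ς) * u ς|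
      ≤ C * Real.exp ((αm - α) * s) / (α - αm) := by
    have hint : IntegrableOn (fun ς : ℝ => C * Real.exp (-(α - αm) * ς)) (Set.Ioi s) :=
      (exp_neg_integrableOn_Ioi s hb1).const_mul C
    have hae : ∀ᵐ ς ∂(volume.restrict (Set.Ioi s)),
        ‖Real.exp (αm * ς) * u ς‖ ≤ C * Real.exp (-(α - αm) * ς) := by
      refine (ae_restrict_mem measurableSet_Ioi).mono fun ς hς => ?_
      have hς' : s₀ ≤ ς := le_trans hs (le_of_lt hς)
      have := hbound ς hς'
      rw [Real.norm_eq_abs, abs_mul, abs_of_pos (Real.exp_pos _)]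
      calc Real.exp (αm * ς) * |u ς| ≤ Real.exp (αm * ς) * (C * Real.exp (-α * ς)) := by
            exact mul_le_mul_of_nonneg_left this (le_of_lt (Real.exp_pos _))
        _ = C * Real.exp (-(α - αm) * ς) := by
            rw [mul_left_comm, ← Real.exp_add]; ring_nf
    have h1 := MeasureTheory.norm_integral_le_of_norm_le hint hae
    rw [Real.norm_eq_abs] at h1
    have h2 : ∫ ς in Set.Ioi s, C * Real.exp (-(α - αm) * ς)
        = C * Real.exp ((αm - α) * s) / (α - αm) := by
      rw [MeasureTheory.integral_const_mul, exp_int_Ioi s (α - αm) hb1]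
      rw [show -(α - αm) * s = (αm - α) * s by ring]
      ring
    linarith [h1, h2 ▸ h1]
  -- bound on the interval integral
  have hIcc : |∫ ς in s₀..s, Real.exp (αp * ς) * u ς|
      ≤ C * Real.exp ((αp - α) * s) / (αp - α) := by
    have habs := intervalIntegral.abs_integral_le_integral_abs
      (a := s₀) (b := s) (μ := volume) (f := fun ς => Real.exp (αp * ς) * u ς) hs
    have hmono : ∫ ς in s₀..s, |Real.exp (αp * ς) * u ς|
        ≤ ∫ ς in s₀..s, C * Real.exp ((αp - α) * ς) := by
      apply intervalIntegral.integral_mono_on hs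
      · exact ((by fun_prop : Continuous fun ς => Real.exp (αp * ς) * u ς)).abs.intervalIntegrable _ _
      · exact (by fun_prop : Continuous fun ς => C * Real.exp ((αp - α) * ς)).intervalIntegrable _ _
      · intro ς hς
        rw [abs_mul, abs_of_pos (Real.exp_pos _)]
        calc Real.exp (αp * ς) * |u ς| ≤ Real.exp (αp * ς) * (C * Real.exp (-α * ς)) :=
              mul_le_mul_of_nonneg_left (hbound ς hς.1) (le_of_lt (Real.exp_pos _))
          _ = C * Real.exp ((αp - α) * ς) := by
              rw [mul_left_comm, ← Real.exp_add]; ring_nf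
    have hval : ∫ ς in s₀..s, C * Real.exp ((αp - α) * ς)
        = C * (Real.exp ((αp - α) * s) - Real.exp ((αp - α) * s₀)) / (αp - α) := by
      rw [intervalIntegral.integral_const_mul, exp_int_interval s₀ s (αp - α) (ne_of_gt hb2)]
      ring
    have hle : C * (Real.exp ((αp - α) * s) - Real.exp ((αp - α) * s₀)) / (αp - α)
        ≤ C * Real.exp ((αp - α) * s) / (αp - α) := by
      rw [div_le_div_iff₀ hb2 hb2]
      nlinarith [mul_nonneg (mul_nonneg hC (Real.exp_pos ((αp - α) * s₀)).le) hb2.le]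
    calc |∫ ς in s₀..s, Real.exp (αp * ς) * u ς| ≤ ∫ ς in s₀..s, |Real.exp (αp * ς) * u ς| := habs
      _ ≤ ∫ ς in s₀..s, C * Real.exp ((αp - α) * ς) := hmono
      _ = C * (Real.exp ((αp - α) * s) - Real.exp ((αp - α) * s₀)) / (αp - α) := hval
      _ ≤ C * Real.exp ((αp - α) * s) / (αp - α) := hle
  -- combine
  rw [abs_mul, abs_of_pos (by positivity : (0:ℝ) < 1 / (αp - αm))]
  have htri : |(-(Real.exp (-αm * s) * ∫ ς in Set.Ioi s, Real.exp (αm * ς) * u ς)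
      - Real.exp (-αp * s) * ∫ ς in s₀..s, Real.exp (αp * ς) * u ς)|
      ≤ Real.exp (-αm * s) * |∫ ς in Set.Ioi s, Real.exp (αm * ς) * u ς|
        + Real.exp (-αp * s) * |∫ ς in s₀..s, Real.exp (αp * ς) * u ς| := by
    calc _ ≤ |Real.exp (-αm * s) * ∫ ς in Set.Ioi s, Real.exp (αm * ς) * u ς|
          + |Real.exp (-αp * s) * ∫ ς in s₀..s, Real.exp (αp * ς) * u ς| := by
            rw [sub_eq_add_neg]
            exact (abs_add_le _ _).trans (by rw [abs_neg, abs_neg])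
      _ = _ := by rw [abs_mul, abs_mul, abs_of_pos (Real.exp_pos _), abs_of_pos (Real.exp_pos _)]
  have h1 : Real.exp (-αm * s) * |∫ ς in Set.Ioi s, Real.exp (αm * ς) * u ς|
      ≤ C * Real.exp (-α * s) / (α - αm) := by
    calc Real.exp (-αm * s) * |∫ ς in Set.Ioi s, Real.exp (αm * ς) * u ς|
        ≤ Real.exp (-αm * s) * (C * Real.exp ((αm - α) * s) / (α - αm)) :=
          mul_le_mul_of_nonneg_left hIoi (le_of_lt (Real.exp_pos _))
      _ = C * Real.exp (-α * s) / (α - αm) := by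
          rw [show Real.exp (-αm * s) * (C * Real.exp ((αm - α) * s) / (α - αm))
            = C * (Real.exp (-αm * s) * Real.exp ((αm - α) * s)) / (α - αm) by ring,
            ← Real.exp_add]
          ring_nf
  have h2 : Real.exp (-αp * s) * |∫ ς in s₀..s, Real.exp (αp * ς) * u ς|
      ≤ C * Real.exp (-α * s) / (αp - α) := by
    calc Real.exp (-αp * s) * |∫ ς in s₀..s, Real.exp (αp * ς) * u ς|
        ≤ Real.exp (-αp * s) * (C * Real.exp ((αp - α) * s) / (αp - α)) :=
          mul_le_mul_of_nonneg_left hIcc (le_of_lt (Real.exp_pos _))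
      _ = C * Real.exp (-α * s) / (αp - α) := by
          rw [show Real.exp (-αp * s) * (C * Real.exp ((αp - α) * s) / (αp - α))
            = C * (Real.exp (-αp * s) * Real.exp ((αp - α) * s)) / (αp - α) by ring,
            ← Real.exp_add]
          ring_nf
  have hsum := add_le_add h1 h2
  have hfinal := le_trans htri hsum
  calc 1 / (αp - αm) * |_| ≤ 1 / (αp - αm)
        * (C * Real.exp (-α * s) / (α - αm) + C * Real.exp (-α * s) / (αp - α)) :=
        mul_le_mul_of_nonneg_left hfinal (by positivity)
    _ = (C / (αp - αm)) * (1 / (α - αm) + 1 / (αp - α)) * Real.exp (-α * s) := by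
        field_simp
end

section
/- There exists a constant K > 0 (one may take K = 2) such that for all real numbers s and ρ, writing p = tanh(s/2), c = cosh(ρ/2), σ = sinh(ρ/2) and D = c² + p², one has: (i) |p·(4 + σ²·(3 − p²))| / (2D) ≤ K; (ii) |sinh(ρ)| / (2·cosh³(s/2)·D) ≤ K; (iii) |p·(1 + p²·c²)| / (2D) ≤ K. -/
set_option maxHeartbeats 1600000 in
/-- Uniform bound on the entries of the second fundamental form of the
hypersurfaces equidistant from a bisector in complex hyperbolic space
(Lemma 1.2 of the paper). -/
theorem stmt_13 :
    ∃ K > 0, ∀ s ρ : ℝ,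
      |Real.tanh (s / 2) * (4 + Real.sinh (ρ / 2) ^ 2 * (3 - Real.tanh (s / 2) ^ 2))|
          / (2 * (Real.cosh (ρ / 2) ^ 2 + Real.tanh (s / 2) ^ 2)) ≤ K ∧
      |Real.sinh ρ|
          / (2 * Real.cosh (s / 2) ^ 3 * (Real.cosh (ρ / 2) ^ 2 + Real.tanh (s / 2) ^ 2)) ≤ K ∧
      |Real.tanh (s / 2) * (1 + Real.tanh (s / 2) ^ 2 * Real.cosh (ρ / 2) ^ 2)|
          / (2 * (Real.cosh (ρ / 2) ^ 2 + Real.tanh (s / 2) ^ 2)) ≤ K := by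
  refine ⟨2, by norm_num, fun s ρ => ?_⟩
  set p := Real.tanh (s / 2) with hp
  set c := Real.cosh (ρ / 2) with hc
  set σ := Real.sinh (ρ / 2) with hσ
  set ch := Real.cosh (s / 2) with hch
  have hc1 : (1 : ℝ) ≤ c := Real.one_le_cosh _
  have hch1 : (1 : ℝ) ≤ ch := Real.one_le_cosh _
  have hcσ : c ^ 2 = 1 + σ ^ 2 := Real.cosh_sq' _
  have hshp : (0:ℝ) < ch := lt_of_lt_of_le one_pos hch1
  have hpdef : p = Real.sinh (s / 2) / ch := Real.tanh_eq_sinh_div_cosh _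
  have hchsq : ch ^ 2 = 1 + Real.sinh (s / 2) ^ 2 := Real.cosh_sq' _
  have hp2' : p ^ 2 ≤ 1 := by
    rw [hpdef, div_pow]
    rw [div_le_one (by positivity)]
    nlinarith
  have hp1 : |p| ≤ 1 := by nlinarith [sq_abs p, abs_nonneg p]
  have hpl : -1 ≤ p := (abs_le.mp hp1).1
  have hpu : p ≤ 1 := (abs_le.mp hp1).2
  have hp2 : p ^ 2 ≤ 1 := hp2'
  have hD : (0 : ℝ) < c ^ 2 + p ^ 2 := by nlinarith
  refine ⟨?_, ?_, ?_⟩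
  · rw [div_le_iff₀ (by positivity), abs_le]
    constructor <;> nlinarith [sq_nonneg σ, sq_nonneg (σ * p), mul_nonneg (sq_nonneg σ) (sub_nonneg.mpr hp2), sq_nonneg (1 - p), sq_nonneg (1 + p)]
  · rw [div_le_iff₀ (by positivity)]
    have hρ : Real.sinh ρ = 2 * σ * c := by
      rw [hσ, hc, ← Real.sinh_two_mul]; ring_nf
    rw [hρ]
    have habs : |2 * σ * c| = 2 * |σ| * c := by
      rw [abs_mul, abs_mul, abs_two, abs_of_pos (lt_of_lt_of_le one_pos hc1)]
    rw [habs]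
    nlinarith [sq_abs σ, abs_nonneg σ, sq_nonneg (c - |σ|), sq_nonneg p, mul_pos hD (lt_of_lt_of_le one_pos hch1), (by nlinarith : (1:ℝ) ≤ ch ^ 3)]
  · rw [div_le_iff₀ (by positivity)]
    have key : |p * (1 + p ^ 2 * c ^ 2)| ≤ 1 + c ^ 2 := by
      rw [abs_mul, abs_of_pos (by positivity : (0:ℝ) < 1 + p ^ 2 * c ^ 2)]
      calc |p| * (1 + p ^ 2 * c ^ 2) ≤ 1 * (1 + 1 * c ^ 2) := by
            apply mul_le_mul hp1 _ (by positivity) one_pos.le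
            nlinarith
        _ = 1 + c ^ 2 := by ring
    have hc2 : (1:ℝ) ≤ c ^ 2 := by nlinarith
    linarith [key, sq_nonneg p]
end

section
/- Let x > 0, y ≥ 0 and φ ≥ 0 be real numbers. Set ϱ = √((x+φ)² + y²), u = 2x/(x − φ + ϱ), v = √((x − φ + ϱ)/(x + φ + ϱ)) and V = v·√(1 − u). Then: 0 < u ≤ 1, 0 < v ≤ 1, and x = u·v²·ϱ/(1 + V²), y = 2·V·ϱ/(1 + V²), x + φ = ϱ·(1 − V²)/(1 + V²). -/
/-- The change of variables (55)/(56) of Section 3: properties `u ≤ 1`, `v ≤ 1`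
and the inversion formulas for `x`, `y` and `x + φ`. -/
theorem stmt_16 (x y φ : ℝ) (hx : 0 < x) (hy : 0 ≤ y) (hφ : 0 ≤ φ)
    (ϱ u v V : ℝ)
    (hϱ : ϱ = Real.sqrt ((x + φ) ^ 2 + y ^ 2))
    (hu : u = 2 * x / (x - φ + ϱ))
    (hv : v = Real.sqrt ((x - φ + ϱ) / (x + φ + ϱ)))
    (hV : V = v * Real.sqrt (1 - u)) :
    (0 < u ∧ u ≤ 1) ∧ (0 < v ∧ v ≤ 1) ∧
      x = u * v ^ 2 * ϱ / (1 + V ^ 2) ∧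
      y = 2 * V * ϱ / (1 + V ^ 2) ∧
      x + φ = ϱ * (1 - V ^ 2) / (1 + V ^ 2) := by
  have hϱ2 : ϱ ^ 2 = (x + φ) ^ 2 + y ^ 2 := by
    rw [hϱ, Real.sq_sqrt (by positivity)]
  have hϱge : x + φ ≤ ϱ := by
    rw [hϱ]
    calc x + φ = Real.sqrt ((x + φ) ^ 2) := (Real.sqrt_sq (by linarith)).symm
    _ ≤ Real.sqrt ((x + φ) ^ 2 + y ^ 2) := Real.sqrt_le_sqrt (by nlinarith)
  have hϱpos : 0 < ϱ := lt_of_lt_of_le (by linarith) hϱge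
  have hA : 0 < x - φ + ϱ := by linarith
  have hB : 0 < x + φ + ϱ := by linarith
  have hupos : 0 < u := by rw [hu]; positivity
  have hule : u ≤ 1 := by
    rw [hu, div_le_one hA]; linarith
  have hv2 : v ^ 2 = (x - φ + ϱ) / (x + φ + ϱ) := by
    rw [hv, Real.sq_sqrt (by positivity)]
  have hvpos : 0 < v := by
    rw [hv]; exact Real.sqrt_pos.2 (by positivity)
  have hvle : v ≤ 1 := by
    rw [hv, show (1:ℝ) = Real.sqrt 1 from Real.sqrt_one.symm]
    exact Real.sqrt_le_sqrt (by rw [div_le_one hB]; linarith)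
  have hV2 : V ^ 2 = (ϱ - (x + φ)) / (x + φ + ϱ) := by
    rw [hV, mul_pow, Real.sq_sqrt (by linarith), hv2, hu]
    field_simp
    ring
  have h1V : 1 + V ^ 2 = 2 * ϱ / (x + φ + ϱ) := by
    rw [hV2]; field_simp; ring
  have hVnn : 0 ≤ V := by
    rw [hV]; exact mul_nonneg hvpos.le (Real.sqrt_nonneg _)
  have hyV : y = V * (x + φ + ϱ) := by
    have h1 : (V * (x + φ + ϱ)) ^ 2 = y ^ 2 := by
      rw [mul_pow, hV2]; field_simp; nlinarith
    have h2 : 0 ≤ V * (x + φ + ϱ) := mul_nonneg hVnn hB.le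
    nlinarith [sq_nonneg (y - V * (x + φ + ϱ))]
  refine ⟨⟨hupos, hule⟩, ⟨hvpos, hvle⟩, ?_, ?_, ?_⟩
  · rw [hu, hv2, h1V]; field_simp
  · rw [hyV, h1V]; field_simp
  · have hm : 1 - V ^ 2 = 2 * (x + φ) / (x + φ + ϱ) := by
      rw [hV2]; field_simp; ring
    rw [hm, h1V, div_div_eq_mul_div, mul_assoc, div_mul_cancel₀ _ hB.ne',
      eq_div_iff (by positivity : (2 : ℝ) * ϱ ≠ 0)]
    ring
end
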